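/- Suppose G = (V,E) is a graph with ℓ = P·k vertices for some real P > 1 and positive integer k, and suppose δ(G) ≥ ℓ/2 + η·√ℓ for some η > 0. Assume the discrepancy lemma: for any sets A₀,…,A_{ℓ−1} ⊆ V and any p ∈ [0,1] there exists Y ⊆ V with ||A_i ∩ Y| − p|A_i|| ≤ 6√ℓ for all i. Then G has an induced subgraph H on exactly k vertices with δ(H) ≥ k/2 + (η/√P − 19√P)·√k. -/

import Mathlib

open Finset
open scoped Classical

theorem stmt_7 {V : Type*} [Fintype V] (G : SimpleGraph V) (ℓ k : ℕ) (P η : ℝ)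
    (hk : 0 < k) (hP : 1 < P) (hcard : Fintype.card V = ℓ) (hℓ : (ℓ : ℝ) = P * k)
    (hη : 0 < η)
    (hδ : ∀ v : V, (ℓ : ℝ) / 2 + η * Real.sqrt ℓ ≤ (G.degree v : ℝ))
    (discLem : ∀ (A : Fin ℓ → Finset V) (p : ℝ), 0 ≤ p → p ≤ 1 →
      ∃ Y : Finset V, ∀ i,
        |((A i ∩ Y).card : ℝ) - p * ((A i).card : ℝ)| ≤ 6 * Real.sqrt ℓ) :
    ∃ S : Finset V, S.card = k ∧
      ∀ x ∈ S, (k : ℝ) / 2 + (η / Real.sqrt P - 19 * Real.sqrt P) * Real.sqrt k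
        ≤ ((S.filter fun y => G.Adj x y).card : ℝ) := by
  have hkR : (0:ℝ) < k := by exact_mod_cast hk
  have hPpos : (0:ℝ) < P := by linarith
  have hℓpos : 0 < ℓ := by
    have h : (0:ℝ) < (ℓ:ℝ) := by rw [hℓ]; positivity
    exact_mod_cast h
  have hkℓ : k < ℓ := by
    have h : (k:ℝ) < (ℓ:ℝ) := by rw [hℓ]; nlinarith
    exact_mod_cast h
  set sq := Real.sqrt ℓ with hsqdef
  have hsq1 : 1 ≤ sq := by
    rw [hsqdef, Real.one_le_sqrt]
    exact_mod_cast hℓpos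
  have hsqP : sq = Real.sqrt P * Real.sqrt k := by
    rw [hsqdef, hℓ, Real.sqrt_mul hPpos.le]
  have hsPpos : (0:ℝ) < Real.sqrt P := Real.sqrt_pos.mpr hPpos
  have hPP : Real.sqrt P * Real.sqrt P = P := Real.mul_self_sqrt hPpos.le
  have hsknn : (0:ℝ) ≤ Real.sqrt k := Real.sqrt_nonneg _
  set i0 : Fin ℓ := ⟨0, hℓpos⟩ with hi0
  set e : Fin ℓ ≃ V := (Fintype.equivFinOfCardEq hcard).symm with he
  set w : V := e i0 with hw
  set A : Fin ℓ → Finset V :=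
    fun i => if i = i0 then (univ : Finset V) else G.neighborFinset (e i) with hA
  set p : ℝ := 1 / P with hp
  have hp0 : 0 ≤ p := by positivity
  have hp1 : p ≤ 1 := by rw [hp, div_le_one hPpos]; linarith
  obtain ⟨Y, hY⟩ := discLem A p hp0 hp1
  have hpk : p * (ℓ:ℝ) = k := by
    rw [hp, hℓ]; field_simp
  have hYcard : |((Y.card):ℝ) - (k:ℝ)| ≤ 6 * sq := by
    have h := hY i0
    simp only [hA, if_pos rfl, univ_inter, card_univ, hcard] at h
    rwa [hpk] at h
  -- lower bound on |N(v) ∩ Y| for v ≠ w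
  have hNbd : ∀ v : V, v ≠ w →
      (k:ℝ)/2 + (η / Real.sqrt P) * Real.sqrt k - 6 * sq
        ≤ ((G.neighborFinset v ∩ Y).card : ℝ) := by
    intro v hv
    have hi : e.symm v ≠ i0 := by
      intro h
      apply hv
      rw [hw, ← h, e.apply_symm_apply]
    have h := hY (e.symm v)
    simp only [hA, if_neg hi] at h
    rw [e.apply_symm_apply] at h
    have hdeg : (G.neighborFinset v).card = G.degree v :=
      G.card_neighborFinset_eq_degree v
    rw [hdeg] at h
    have h1 : p * (G.degree v : ℝ) - 6 * sq ≤ ((G.neighborFinset v ∩ Y).card : ℝ) := by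
      have := (abs_le.mp h).1
      linarith
    have h2 : (ℓ:ℝ)/2 + η * sq ≤ (G.degree v : ℝ) := hδ v
    have h3 : p * ((ℓ:ℝ)/2 + η * sq) ≤ p * (G.degree v : ℝ) :=
      mul_le_mul_of_nonneg_left h2 hp0
    have h4 : p * ((ℓ:ℝ)/2) = (k:ℝ)/2 := by rw [← hpk]; ring
    have h5 : p * (η * sq) = (η / Real.sqrt P) * Real.sqrt k := by
      rw [hp, hsqP]
      field_simp
      linear_combination hPP
    have hexp : p * ((ℓ:ℝ)/2 + η * sq) = (k:ℝ)/2 + (η / Real.sqrt P) * Real.sqrt k := by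
      calc p * ((ℓ:ℝ)/2 + η * sq) = p * ((ℓ:ℝ)/2) + p * (η * sq) := by ring
        _ = (k:ℝ)/2 + (η / Real.sqrt P) * Real.sqrt k := by rw [h4, h5]
    linarith
  -- the final arithmetic step
  have harith : ∀ r : ℝ,
      (k:ℝ)/2 + (η / Real.sqrt P) * Real.sqrt k - 6 * sq - (6 * sq + 1) ≤ r →
      (k:ℝ)/2 + (η / Real.sqrt P - 19 * Real.sqrt P) * Real.sqrt k ≤ r := by
    intro r hr
    have h19 : (η / Real.sqrt P - 19 * Real.sqrt P) * Real.sqrt k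
        = (η / Real.sqrt P) * Real.sqrt k - 19 * sq := by
      rw [hsqP]; ring
    linarith
  have hsqnn : (0:ℝ) ≤ sq := by linarith
  by_cases hc : k ≤ (Y \ {w}).card
  · -- remove vertices from Y \ {w}
    obtain ⟨S, hSsub, hScard⟩ := Finset.exists_subset_card_eq hc
    refine ⟨S, hScard, ?_⟩
    intro x hx
    have hxY : x ∈ Y \ {w} := hSsub hx
    have hxw : x ≠ w := by
      rw [mem_sdiff, mem_singleton] at hxY
      exact hxY.2
    have hsubY : S ⊆ Y := hSsub.trans (sdiff_subset)
    have hfil : (S.filter fun y => G.Adj x y) = G.neighborFinset x ∩ S := by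
      ext y
      simp [SimpleGraph.mem_neighborFinset, and_comm]
    have hcount : ((G.neighborFinset x ∩ Y).card : ℝ)
        ≤ ((G.neighborFinset x ∩ S).card : ℝ) + (((Y.card):ℝ) - k) := by
      have h1 : G.neighborFinset x ∩ Y ⊆ (G.neighborFinset x ∩ S) ∪ (Y \ S) := by
        intro y hy
        rw [mem_inter] at hy
        rw [mem_union, mem_inter, mem_sdiff]
        by_cases hyS : y ∈ S
        · exact Or.inl ⟨hy.1, hyS⟩
        · exact Or.inr ⟨hy.2, hyS⟩
      have h2 := card_le_card h1
      have h3 := card_union_le (G.neighborFinset x ∩ S) (Y \ S)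
      have h4 : (Y \ S).card = Y.card - S.card := card_sdiff_of_subset hsubY
      have h5 : S.card ≤ Y.card := card_le_card hsubY
      have h6 : ((Y \ S).card : ℝ) = ((Y.card):ℝ) - k := by
        rw [h4, Nat.cast_sub h5, hScard]
      have h7 : ((G.neighborFinset x ∩ Y).card : ℝ)
          ≤ ((G.neighborFinset x ∩ S).card : ℝ) + ((Y \ S).card : ℝ) := by
        exact_mod_cast le_trans h2 h3
      linarith
    have hYub : ((Y.card):ℝ) - k ≤ 6 * sq := (abs_le.mp hYcard).2
    rw [hfil]
    apply harith
    have hN := hNbd x hxw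
    linarith
  · -- add vertices avoiding w
    push_neg at hc
    have hTsub : (Y \ {w}) ⊆ (univ \ {w} : Finset V) :=
      sdiff_subset_sdiff (subset_univ Y) (Finset.Subset.refl _)
    have hcardc : k ≤ (univ \ {w} : Finset V).card := by
      rw [card_sdiff_of_subset (by simp), card_univ, hcard, card_singleton]
      omega
    obtain ⟨S, hTS, hSsub, hScard⟩ :=
      Finset.exists_subsuperset_card_eq hTsub hc.le hcardc
    refine ⟨S, hScard, ?_⟩
    intro x hx
    have hxw : x ≠ w := by
      have := hSsub hx
      rw [mem_sdiff, mem_singleton] at this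
      exact this.2
    have hfil : (S.filter fun y => G.Adj x y) = G.neighborFinset x ∩ S := by
      ext y
      simp [SimpleGraph.mem_neighborFinset, and_comm]
    have hcount : ((G.neighborFinset x ∩ Y).card : ℝ)
        ≤ ((G.neighborFinset x ∩ S).card : ℝ) + 1 := by
      have h1 : G.neighborFinset x ∩ Y ⊆ (G.neighborFinset x ∩ S) ∪ {w} := by
        intro y hy
        rw [mem_inter] at hy
        rw [mem_union, mem_inter, mem_singleton]
        by_cases hyw : y = w
        · exact Or.inr hyw
        · exact Or.inl ⟨hy.1, hTS (by rw [mem_sdiff, mem_singleton]; exact ⟨hy.2, hyw⟩)⟩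
      have h2 := card_le_card h1
      have h3 := card_union_le (G.neighborFinset x ∩ S) ({w} : Finset V)
      have h4 : ((G.neighborFinset x ∩ Y).card : ℕ)
          ≤ (G.neighborFinset x ∩ S).card + 1 := by
        simpa using le_trans h2 h3
      exact_mod_cast h4
    rw [hfil]
    apply harith
    have hN := hNbd x hxw
    linarith
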